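/- arXiv:1808.09328 — 2 statements merged into one kernel-verified Lean document; each statement's English description precedes it below -/
import Mathlib

section
/- Let 𝕂 be a field of prime characteristic p, q, r ∈ 𝕂ˣ, m ∈ ℕ₀ with (m)_q! ≠ 0 and b_m = ∏_{i=0}^{m-1}(1-q^i r) ≠ 0, and suppose q = 1 and r = -1 (which occurs when two distinct j ≤ m satisfy q^{n+j-1}r² = 1). Then 𝕁 ∩ [0, m] equals {0} if s = -1, and is empty otherwise, where 𝕁 is the recursively defined set attached to (q, r, s, p). -/
variable {K : Type*} [Field K]

/-- The q-number `(k)_x = ∑_{i=0}^{k-1} x^i`. -/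
def qNum (x : K) (k : ℕ) : K := ∑ i ∈ Finset.range k, x ^ i

/-- The q-factorial `(m)_q! = ∏_{k=1}^m (k)_q`. -/
def qFac (q : K) (m : ℕ) : K := ∏ k ∈ Finset.range m, qNum q (k + 1)

/-- `b_m = ∏_{i=0}^{m-1} (1 - q^i r)`. -/
def bProd (q r : K) (m : ℕ) : K := ∏ i ∈ Finset.range m, (1 - q ^ i * r)

/-- The recursively defined set 𝕁 = 𝕁^p_{q,r,s}. -/
def memJ (q r s : K) : ℕ → Prop
  | j => q ^ (j * (j - 1) / 2) * (-r) ^ j * s = -1 ∧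
      ∀ n, n < j → memJ q r s n →
        if (j - n) % 2 = 0
        then qNum (q ^ (n + j - 1) * r ^ 2) ((j - n) / 2) = 0
        else qNum (-(q ^ ((n + j - 1) / 2) * r)) (j - n) = 0
  termination_by j => j

/-- The subset 𝕁₁ ⊆ 𝕁 (condition (1) of Lemma le:J). -/
def memJ1 (q r s : K) (j : ℕ) : Prop :=
  memJ q r s j ∧ ∀ k, k < j → memJ q r s k → q ^ (k + j - 1) * r ^ 2 ≠ 1

/-- The subset 𝕁₂ ⊆ 𝕁 (condition (2) of Lemma le:J). -/
def memJ2 (q r s : K) (n : ℕ) : Prop :=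
  memJ q r s n ∧ ∃ j, j < n ∧ memJ q r s j ∧ q ^ (n + j - 1) * r ^ 2 = 1

lemma qNum_one (k : ℕ) : qNum (1 : K) k = (k : K) := by
  simp [qNum]

lemma qFac_one (m : ℕ) : qFac (1 : K) m = (m.factorial : K) := by
  induction m with
  | zero => simp [qFac]
  | succ n ih =>
    rw [qFac, Finset.prod_range_succ, ← qFac, ih, qNum_one, Nat.factorial_succ]
    push_cast; ring


theorem stmt_13 (p : ℕ) [CharP K p] (hp : p.Prime) (q r s : K) (hs : s ≠ 0)
    (hq : q = 1) (hr : r = -1) (m : ℕ)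
    (hm : qFac q m ≠ 0) (hb : bProd q r m ≠ 0) :
    (s = -1 → {j : ℕ | j ≤ m ∧ memJ q r s j} = {0}) ∧
    (s ≠ -1 → {j : ℕ | j ≤ m ∧ memJ q r s j} = ∅) := by

  subst hq hr
  have hmp : m < p := by
    by_contra h
    push_neg at h
    apply hm
    rw [qFac_one]
    exact (CharP.cast_eq_zero_iff K p _).2 (Nat.dvd_factorial hp.pos h)
  have hcast : ∀ k : ℕ, 0 < k → k < p → (k : K) ≠ 0 := by
    intro k hk hkp h
    rw [CharP.cast_eq_zero_iff K p] at h
    exact absurd (Nat.le_of_dvd hk h) (not_le.2 hkp)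
  -- first condition of memJ j is s = -1
  have hfirst : ∀ j : ℕ, memJ 1 (-1) s j → s = -1 := by
    intro j h
    rw [memJ] at h
    simpa using h.1
  constructor
  · intro hs1
    subst hs1
    have h0 : memJ (1:K) (-1) (-1) 0 := by
      rw [memJ]
      constructor
      · simp
      · intro n hn; omega
    ext j
    simp only [Set.mem_setOf_eq, Set.mem_singleton_iff]
    constructor
    · rintro ⟨hjm, hj⟩
      by_contra hj0
      have hj1 : 1 ≤ j := Nat.one_le_iff_ne_zero.2 hj0
      rw [memJ] at hj
      have := hj.2 0 (by omega) h0
      simp only [Nat.sub_zero, Nat.add_zero, neg_neg, one_pow, one_mul, neg_one_sq] at this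
      split_ifs at this with hpar
      · rw [qNum_one] at this
        exact hcast (j / 2) (by omega) (by omega) this
      · rw [qNum_one] at this
        exact hcast j hj1 (by omega) this
    · rintro rfl
      exact ⟨Nat.zero_le _, h0⟩
  · intro hs1
    ext j
    simp only [Set.mem_setOf_eq, Set.mem_empty_iff_false, iff_false, not_and]
    intro _ hj
    exact hs1 (hfirst j hj)
end

section
/- Let 𝕂 be a field of characteristic p ≥ 0, q, r, s ∈ 𝕂ˣ, and m ∈ ℕ₀ with (m)_q! · ∏_{i=0}^{m-1}(1-q^i r) ≠ 0. Define m' = (m+1)/2 if m is odd; m' = m/2 if m is even and q^{m²/4} r^{m/2} s ≠ -1; and m' = m/2 + 1 if m is even and q^{m²/4} r^{m/2} s = -1. Then |𝕁 ∩ [0, m]| ≤ m', where 𝕁 is the recursively defined set attached to (q, r, s). -/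
variable {K : Type*} [Field K]

/-- Two elements of 𝕁 always differ by at least 3: a difference of 1 or 2 would
force the q-number `(1)_x = 1` to vanish. -/
lemma memJ_gap (q r s : K) {n j : ℕ} (hn : memJ q r s n) (hj : memJ q r s j)
    (h : n < j) : n + 3 ≤ j := by
  by_contra h'
  push_neg at h'
  rw [memJ] at hj
  have hc := hj.2 n h hn
  have hd : j - n = 1 ∨ j - n = 2 := by omega
  rcases hd with hd | hd <;> rw [hd] at hc <;> simp [qNum] at hc

/-- A set of naturals bounded by `m` whose elements pairwise differ by at least 3
has at most `m / 3 + 1` elements. -/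
lemma count_gap3 (S : Set ℕ) (m : ℕ) (hS : ∀ a ∈ S, ∀ b ∈ S, a < b → a + 3 ≤ b)
    (hSm : ∀ a ∈ S, a ≤ m) : S.ncard ≤ m / 3 + 1 := by
  have hinj : Set.InjOn (fun j => j / 3) S := by
    intro a ha b hb hab
    have hab' : a / 3 = b / 3 := hab
    by_contra hne
    rcases Nat.lt_or_ge a b with h | h
    · have := hS a ha b hb h; omega
    · have hba : b < a := by omega
      have := hS b hb a ha hba; omega
  have h1 : S.ncard = ((fun j => j / 3) '' S).ncard := (Set.ncard_image_of_injOn hinj).symm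
  rw [h1]
  have hsub : (fun j => j / 3) '' S ⊆ Set.Iic (m / 3) := by
    rintro x ⟨a, ha, rfl⟩
    exact Nat.div_le_div_right (hSm a ha)
  calc ((fun j => j / 3) '' S).ncard ≤ (Set.Iic (m / 3)).ncard :=
        Set.ncard_le_ncard hsub (Set.finite_Iic _)
    _ = m / 3 + 1 := by
        rw [← Finset.coe_Iic, Set.ncard_coe_finset, Nat.card_Iic]

theorem stmt_17 (q r s : K) (hq : q ≠ 0) (hr : r ≠ 0) (hs : s ≠ 0) (m : ℕ)
    (hm : qFac q m * bProd q r m ≠ 0) :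
    (Odd m → {j : ℕ | j ≤ m ∧ memJ q r s j}.ncard ≤ (m + 1) / 2) ∧
    (Even m → q ^ (m ^ 2 / 4) * r ^ (m / 2) * s ≠ -1 →
      {j : ℕ | j ≤ m ∧ memJ q r s j}.ncard ≤ m / 2) ∧
    (Even m → q ^ (m ^ 2 / 4) * r ^ (m / 2) * s = -1 →
      {j : ℕ | j ≤ m ∧ memJ q r s j}.ncard ≤ m / 2 + 1) := by
  set S : Set ℕ := {j : ℕ | j ≤ m ∧ memJ q r s j} with hSdef
  have key : S.ncard ≤ m / 3 + 1 :=
    count_gap3 S m (fun a ha b hb h => memJ_gap q r s ha.2 hb.2 h) (fun a ha => ha.1)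
  refine ⟨?_, ?_, ?_⟩
  · rintro ⟨k, hk⟩
    omega
  · intro heven hne
    rcases Nat.eq_zero_or_pos m with hm0 | hm1
    · subst hm0
      have hSempty : S = ∅ := by
        rw [Set.eq_empty_iff_forall_notMem]
        rintro j ⟨hj0, hjJ⟩
        have : j = 0 := by omega
        subst this
        rw [memJ] at hjJ
        have h1 := hjJ.1
        norm_num at h1 hne
        exact hne h1
      rw [hSempty, Set.ncard_empty]
    · obtain ⟨k, hk⟩ := heven
      omega
  · intro _ _
    obtain ⟨k, hk⟩ := ‹Even m›
    omega
end
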